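/- An undirected graph G is the Fitch graph of some 0/1-edge-labeled rooted tree if and only if G is a complete multipartite graph, which in turn holds if and only if G does not contain the disjoint union K₂ + K₁ (an edge plus an isolated vertex) as an induced subgraph. -/

import Mathlib

/-- A rooted tree, modeled by its ancestor partial order `le` (x `le` y means
y is an ancestor of x, i.e., y lies on the path from the root to x), together
with last common ancestors `lca`.  The `chain` condition states that the set
of ancestors of any vertex is totally ordered, as in a rooted tree. -/
structure TreeOrder (V : Type) where
  le : V → V → Prop
  le_refl : ∀ x, le x x
  le_antisymm : ∀ x y, le x y → le y x → x = y
  le_trans : ∀ x y z, le x y → le y z → le x z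
  chain : ∀ x y z, le x y → le x z → le y z ∨ le z y
  lca : V → V → V
  le_lca_left : ∀ x y, le x (lca x y)
  le_lca_right : ∀ x y, le y (lca x y)
  lca_le : ∀ x y z, le x z → le y z → le (lca x y) z

/-- A leaf is a `⪯`-minimal vertex. -/
def TreeOrder.IsLeaf {V : Type} (t : TreeOrder V) (x : V) : Prop :=
  ∀ y, t.le y x → y = x

/-- A time map: strict descendants get strictly smaller times. -/
def TreeOrder.IsTimeMap {V : Type} (t : TreeOrder V) (tau : V → ℝ) : Prop :=
  ∀ x y, t.le x y → x ≠ y → tau x < tau y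

/-- `covers u v`: `(u,v)` is an edge of the tree, i.e., `v` is a child of `u`. -/
def TreeOrder.covers {V : Type} (t : TreeOrder V) (u v : V) : Prop :=
  t.le v u ∧ v ≠ u ∧ ∀ w, t.le v w → t.le w u → w = v ∨ w = u

/-- The edge `(u,v)` (with child `v`) lies on the unique path connecting `a` and `b`. -/
def TreeOrder.onPath {V : Type} (t : TreeOrder V) (a b u v : V) : Prop :=
  (t.le a v ∨ t.le b v) ∧ t.le u (t.lca a b)

/-- Fitch adjacency for a 0/1-edge-labeled tree: `lab u v` means the
edge from `u` to its child `v` is labeled 1; two leaves are adjacent iff the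
path connecting them contains a 1-edge. -/
def fitchAdj {V : Type} (t : TreeOrder V) (lab : V → V → Prop) (a b : V) : Prop :=
  a ≠ b ∧ ∃ u v, t.covers u v ∧ lab u v ∧ t.onPath a b u v

/-- `G` is the Fitch graph of some 0/1-edge-labeled rooted tree. -/
def IsFitchGraph {L : Type} (G : SimpleGraph L) : Prop :=
  ∃ (V : Type) (t : TreeOrder V) (lab : V → V → Prop) (f : L → V),
    Function.Injective f ∧ (∀ x, t.IsLeaf (f x)) ∧ (∀ v, t.IsLeaf v → ∃ x, f x = v) ∧
    ∀ a b, G.Adj a b ↔ fitchAdj t lab (f a) (f b)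

/-- A graph is complete multipartite: there is an equivalence relation
(whose classes are the independent sets) such that two vertices are adjacent
iff they are inequivalent. -/
def IsCompleteMultipartite {L : Type} (G : SimpleGraph L) : Prop :=
  ∃ r : L → L → Prop, Equivalence r ∧ ∀ a b, G.Adj a b ↔ ¬ r a b

/-- `G` contains no induced `K₂ + K₁` (an edge plus an isolated vertex). -/
def NoInducedK2K1 {L : Type} (G : SimpleGraph L) : Prop :=
  ¬ ∃ x y z : L, x ≠ y ∧ x ≠ z ∧ y ≠ z ∧ G.Adj x y ∧ ¬ G.Adj x z ∧ ¬ G.Adj y z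

section Aux

variable {V : Type}

lemma lca_comm (t : TreeOrder V) (x y : V) : t.lca x y = t.lca y x :=
  t.le_antisymm _ _ (t.lca_le x y _ (t.le_lca_right y x) (t.le_lca_left y x))
    (t.lca_le y x _ (t.le_lca_right x y) (t.le_lca_left x y))

/-- Key path lemma: a 1-edge on the path x–y with v above x lies on the
path x–z or on the path y–z. -/
lemma key_lemma (t : TreeOrder V) (lab : V → V → Prop) (x y z u v : V)
    (hcov : t.covers u v) (hlab : lab u v) (hxv : t.le x v)
    (hum : t.le u (t.lca x y)) (hxz : x ≠ z) (hyz : y ≠ z) :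
    fitchAdj t lab x z ∨ fitchAdj t lab y z := by
  classical
  obtain ⟨hvu, hvne, hmax⟩ := hcov
  have hxu : t.le x u := t.le_trans _ _ _ hxv hvu
  by_cases h : t.le u (t.lca x z)
  · exact Or.inl ⟨hxz, u, v, ⟨hvu, hvne, hmax⟩, hlab, Or.inl hxv, h⟩
  have hlxz : t.le (t.lca x z) u := by
    rcases t.chain x u (t.lca x z) hxu (t.le_lca_left x z) with h1 | h1
    · exact absurd h1 h
    · exact h1
  have hzv : t.le z v := by
    rcases t.chain x v (t.lca x z) hxv (t.le_lca_left x z) with h2 | h2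
    · rcases hmax _ h2 hlxz with h3 | h3
      · exact h3 ▸ t.le_lca_right x z
      · exact absurd (h3 ▸ t.le_refl u) h
    · exact t.le_trans _ _ _ (t.le_lca_right x z) h2
  have hzu : t.le z u := t.le_trans _ _ _ hzv hvu
  by_cases h' : t.le u (t.lca y z)
  · exact Or.inr ⟨hyz, u, v, ⟨hvu, hvne, hmax⟩, hlab, Or.inr hzv, h'⟩
  have hlyz : t.le (t.lca y z) u := by
    rcases t.chain z u (t.lca y z) hzu (t.le_lca_right y z) with h1 | h1
    · exact absurd h1 h'
    · exact h1
  have hyv : t.le y v := by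
    rcases t.chain z v (t.lca y z) hzv (t.le_lca_right y z) with h3 | h3
    · rcases hmax _ h3 hlyz with h4 | h4
      · exact h4 ▸ t.le_lca_left y z
      · exact absurd (h4 ▸ t.le_refl u) h'
    · exact t.le_trans _ _ _ (t.le_lca_left y z) h3
  have huv : t.le u v := t.le_trans _ _ _ hum (t.lca_le x y v hxv hyv)
  exact absurd (t.le_antisymm _ _ hvu huv) hvne

end Aux

section Constr

variable {L : Type} (s : Setoid L)

/-- Ancestor order on the star tree: root `none`, internal class vertices,
and leaves for elements of `L`. -/
def tle (a b : Option (L ⊕ Quotient s)) : Prop :=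
  a = b ∨ b = none ∨ ∃ x : L, a = some (Sum.inl x) ∧ b = some (Sum.inr (Quotient.mk s x))

lemma tle_none (a : Option (L ⊕ Quotient s)) : tle s a none := Or.inr (Or.inl rfl)

lemma tle_none_iff (b : Option (L ⊕ Quotient s)) : tle s none b ↔ b = none := by
  constructor
  · rintro (rfl | rfl | ⟨x, hx, -⟩) <;> simp_all [tle]
  · rintro rfl; exact Or.inl rfl

lemma tle_refl (a : Option (L ⊕ Quotient s)) : tle s a a := Or.inl rfl

lemma tle_leaf_iff (x : L) (b : Option (L ⊕ Quotient s)) :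
    tle s (some (Sum.inl x)) b ↔
      b = some (Sum.inl x) ∨ b = none ∨ b = some (Sum.inr (Quotient.mk s x)) := by
  constructor
  · rintro (rfl | rfl | ⟨x', hx', rfl⟩)
    · exact Or.inl rfl
    · exact Or.inr (Or.inl rfl)
    · obtain rfl : x = x' := by simpa using hx'
      exact Or.inr (Or.inr rfl)
  · rintro (rfl | rfl | rfl)
    · exact Or.inl rfl
    · exact tle_none s _
    · exact Or.inr (Or.inr ⟨x, rfl, rfl⟩)

lemma tle_class_iff (c : Quotient s) (b : Option (L ⊕ Quotient s)) :
    tle s (some (Sum.inr c)) b ↔ b = some (Sum.inr c) ∨ b = none := by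
  constructor
  · rintro (rfl | rfl | ⟨x', hx', -⟩) <;> simp_all
  · rintro (rfl | rfl)
    · exact Or.inl rfl
    · exact tle_none s _

lemma tle_antisymm {a b : Option (L ⊕ Quotient s)} (h1 : tle s a b) (h2 : tle s b a) :
    a = b := by
  rcases h1 with rfl | rfl | ⟨x, rfl, rfl⟩
  · rfl
  · exact (tle_none_iff s a).mp h2
  · rcases h2 with h | h | ⟨y, hy, hy'⟩ <;> simp_all

lemma tle_trans {a b c : Option (L ⊕ Quotient s)} (h1 : tle s a b) (h2 : tle s b c) :
    tle s a c := by
  rcases h1 with rfl | rfl | ⟨x, rfl, rfl⟩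
  · exact h2
  · rw [tle_none_iff] at h2; rw [h2]; exact tle_none s a
  · rcases h2 with rfl | rfl | ⟨y, hy, hy'⟩
    · exact Or.inr (Or.inr ⟨x, rfl, rfl⟩)
    · exact tle_none s _
    · simp_all

lemma tle_chain (x y z : Option (L ⊕ Quotient s)) (h1 : tle s x y) (h2 : tle s x z) :
    tle s y z ∨ tle s z y := by
  rcases h1 with rfl | rfl | ⟨a, rfl, rfl⟩
  · exact Or.inl h2
  · exact Or.inr (tle_none s z)
  · rcases h2 with h | rfl | ⟨b, hb, rfl⟩
    · exact Or.inr (Or.inr (Or.inr ⟨a, h.symm, rfl⟩))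
    · exact Or.inl (tle_none s _)
    · cases hb; exact Or.inl (Or.inl rfl)

open Classical in
noncomputable def tlca (a b : Option (L ⊕ Quotient s)) : Option (L ⊕ Quotient s) :=
  if tle s a b then b else if tle s b a then a else
    match a, b with
    | some (Sum.inl x), some (Sum.inl y) =>
        if Quotient.mk s x = Quotient.mk s y then some (Sum.inr (Quotient.mk s x)) else none
    | _, _ => none

lemma tle_tlca_left (a b : Option (L ⊕ Quotient s)) : tle s a (tlca s a b) := by
  classical
  unfold tlca
  split_ifs with h1 h2
  · exact h1
  · exact tle_refl s a
  · rcases a with _ | (x | c)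
    · exact absurd (tle_none s b) h2
    · rcases b with _ | (y | c')
      · exact absurd (tle_none s _) h1
      · simp only
        split_ifs with h3
        · exact Or.inr (Or.inr ⟨x, rfl, rfl⟩)
        · exact tle_none s _
      · exact tle_none s _
    · rcases b with _ | (y | c')
      · exact absurd (tle_none s _) h1
      · exact tle_none s _
      · exact tle_none s _

lemma tle_tlca_right (a b : Option (L ⊕ Quotient s)) : tle s b (tlca s a b) := by
  classical
  unfold tlca
  split_ifs with h1 h2
  · exact tle_refl s b
  · exact h2
  · rcases a with _ | (x | c)
    · exact absurd (tle_none s b) h2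
    · rcases b with _ | (y | c')
      · exact absurd (tle_none s _) h1
      · simp only
        split_ifs with h3
        · exact Or.inr (Or.inr ⟨y, rfl, by rw [h3]⟩)
        · exact tle_none s _
      · exact tle_none s _
    · rcases b with _ | (y | c')
      · exact absurd (tle_none s _) h1
      · exact tle_none s _
      · exact tle_none s _

lemma tlca_le (a b z : Option (L ⊕ Quotient s)) (ha : tle s a z) (hb : tle s b z) :
    tle s (tlca s a b) z := by
  classical
  unfold tlca
  split_ifs with h1 h2
  · exact hb
  · exact ha
  · rcases a with _ | (x | c)
    · exact absurd (tle_none s b) h2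
    · rcases b with _ | (y | c')
      · exact absurd (tle_none s _) h1
      · -- a = leaf x, b = leaf y
        simp only
        rcases (tle_leaf_iff s x z).mp ha with rfl | rfl | rfl
        · -- z = leaf x : then hb forces y = x, contradicting ¬ tle a b
          rcases (tle_leaf_iff s y _).mp hb with h | h | h
          · obtain rfl : y = x := by simpa [eq_comm] using h
            exact absurd (tle_refl s _) h1
          · exact absurd h (by simp)
          · exact absurd h (by simp)
        · split_ifs <;> exact tle_none s _
        · -- z = class [x]
          rcases (tle_leaf_iff s y _).mp hb with h | h | h
          · exact absurd h (by simp)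
          · exact absurd h (by simp)
          · obtain hxy : Quotient.mk s x = Quotient.mk s y := by simpa using h
            rw [if_pos hxy]
            exact tle_refl s _
      · -- a = leaf x, b = class c'
        simp only
        rcases (tle_leaf_iff s x z).mp ha with rfl | rfl | rfl
        · rcases (tle_class_iff s c' _).mp hb with h | h <;> exact absurd h (by simp)
        · exact tle_none s _
        · rcases (tle_class_iff s c' _).mp hb with h | h
          · obtain rfl : c' = Quotient.mk s x := by simpa [eq_comm] using h
            exact absurd (Or.inr (Or.inr ⟨x, rfl, rfl⟩)) h1
          · exact absurd h (by simp)
    · rcases b with _ | (y | c')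
      · exact absurd (tle_none s _) h1
      · -- a = class c, b = leaf y
        simp only
        rcases (tle_class_iff s c z).mp ha with rfl | rfl
        · rcases (tle_leaf_iff s y _).mp hb with h | h | h
          · exact absurd h (by simp)
          · exact absurd h (by simp)
          · obtain rfl : c = Quotient.mk s y := by simpa using h
            exact absurd (Or.inr (Or.inr ⟨y, rfl, rfl⟩)) h2
        · exact tle_none s _
      · -- both classes
        simp only
        rcases (tle_class_iff s c z).mp ha with rfl | rfl
        · rcases (tle_class_iff s c' _).mp hb with h | h
          · obtain rfl : c' = c := by simpa [eq_comm] using h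
            exact absurd (tle_refl s _) h1
          · exact absurd h (by simp)
        · exact tle_none s _

noncomputable def treeOf : TreeOrder (Option (L ⊕ Quotient s)) where
  le := tle s
  le_refl := tle_refl s
  le_antisymm := fun _ _ h1 h2 => tle_antisymm s h1 h2
  le_trans := fun _ _ _ h1 h2 => tle_trans s h1 h2
  chain := tle_chain s
  lca := tlca s
  le_lca_left := tle_tlca_left s
  le_lca_right := tle_tlca_right s
  lca_le := tlca_le s

open Classical in
lemma tlca_leaf_leaf (x y : L) (hxy : x ≠ y) :
    tlca s (some (Sum.inl x)) (some (Sum.inl y)) =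
      (if Quotient.mk s x = Quotient.mk s y then some (Sum.inr (Quotient.mk s x)) else none) := by
  have hA : ¬ tle s (some (Sum.inl x)) (some (Sum.inl y)) := by
    rintro (h | h | ⟨x', hx', hx''⟩) <;> simp_all
  have hB : ¬ tle s (some (Sum.inl y)) (some (Sum.inl x)) := by
    rintro (h | h | ⟨y', hy', hy''⟩) <;> simp_all [eq_comm]
  unfold tlca
  rw [if_neg hA, if_neg hB]

end Constr

section Main

variable {L : Type} (G : SimpleGraph L)

lemma CM_of_no (h : NoInducedK2K1 G) : IsCompleteMultipartite G := by
  classical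
  refine ⟨fun a b => ¬ G.Adj a b, ⟨fun a => G.irrefl, fun {a b} hab hba => hab hba.symm,
    ?_⟩, fun a b => not_not.symm⟩
  intro a b c hab hbc hac
  by_cases hba : b = a
  · exact hbc (hba ▸ hac)
  by_cases hbc' : b = c
  · exact hab (hbc' ▸ hac)
  exact h ⟨a, c, b, hac.ne, Ne.symm hba, Ne.symm hbc', hac, hab, fun h' => hbc h'.symm⟩

lemma no_of_CM (h : IsCompleteMultipartite G) : NoInducedK2K1 G := by
  obtain ⟨r, hr, hadj⟩ := h
  rintro ⟨x, y, z, hxy, hxz, hyz, haxy, haxz, hayz⟩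
  have rxz : r x z := by by_contra hc; exact haxz ((hadj x z).mpr hc)
  have ryz : r y z := by by_contra hc; exact hayz ((hadj y z).mpr hc)
  exact (hadj x y).mp haxy (hr.trans rxz (hr.symm ryz))

lemma no_of_fitch (h : IsFitchGraph G) : NoInducedK2K1 G := by
  obtain ⟨V, t, lab, f, hinj, -, -, hadj⟩ := h
  rintro ⟨x, y, z, hxy, hxz, hyz, haxy, haxz, hayz⟩
  obtain ⟨hne, u, v, hcov, hlab, hv, hm⟩ := (hadj x y).mp haxy
  have hfxz : f x ≠ f z := fun h => hxz (hinj h)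
  have hfyz : f y ≠ f z := fun h => hyz (hinj h)
  rcases hv with h | h
  · rcases key_lemma t lab (f x) (f y) (f z) u v hcov hlab h hm hfxz hfyz with hc | hc
    · exact haxz ((hadj x z).mpr hc)
    · exact hayz ((hadj y z).mpr hc)
  · have hm' : t.le u (t.lca (f y) (f x)) := by rw [← lca_comm]; exact hm
    rcases key_lemma t lab (f y) (f x) (f z) u v hcov hlab h hm' hfyz hfxz with hc | hc
    · exact hayz ((hadj y z).mpr hc)
    · exact haxz ((hadj x z).mpr hc)

/-- Trivial tree order on the empty type. -/
def teEmpty : TreeOrder Empty where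
  le _ _ := True
  le_refl _ := trivial
  le_antisymm x := x.elim
  le_trans _ _ _ _ _ := trivial
  chain _ _ _ _ _ := Or.inl trivial
  lca x _ := x
  le_lca_left _ _ := trivial
  le_lca_right _ _ := trivial
  lca_le _ _ _ _ _ := trivial

lemma fitch_of_CM (h : IsCompleteMultipartite G) : IsFitchGraph G := by
  classical
  obtain ⟨r, hr, hadj⟩ := h
  rcases isEmpty_or_nonempty L with hL | hL
  · exact ⟨Empty, teEmpty, fun _ _ => True, fun x => isEmptyElim x,
      fun a => isEmptyElim a, fun x => isEmptyElim x, fun v => v.elim, fun a => isEmptyElim a⟩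
  set s : Setoid L := ⟨r, hr⟩ with hs
  refine ⟨Option (L ⊕ Quotient s), treeOf s, fun u _ => u = none,
    fun x => some (Sum.inl x), fun a b hab => by simpa using hab, ?_, ?_, ?_⟩
  · -- every f x is a leaf
    intro x y hy
    rcases hy with rfl | h | ⟨x', rfl, h⟩
    · rfl
    · exact absurd h (by simp)
    · exact absurd h (by simp)
  · -- every leaf is some f x
    intro v hv
    rcases v with _ | (x | c)
    · obtain ⟨x⟩ := hL
      exact absurd (hv (some (Sum.inl x)) (tle_none s _)) (by simp)
    · exact ⟨x, rfl⟩
    · obtain ⟨x, rfl⟩ := Quotient.exists_rep c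
      exact absurd (hv (some (Sum.inl x)) (Or.inr (Or.inr ⟨x, rfl, rfl⟩))) (by simp)
  · -- adjacency
    intro a b
    rw [hadj]
    constructor
    · intro hnr
      have hab : a ≠ b := fun h => hnr (h ▸ hr.refl a)
      have hq : Quotient.mk s a ≠ Quotient.mk s b := fun h => hnr (Quotient.exact h)
      refine ⟨by simpa using hab, none, some (Sum.inr (Quotient.mk s a)),
        ⟨tle_none s _, by simp, ?_⟩, rfl, Or.inl (Or.inr (Or.inr ⟨a, rfl, rfl⟩)), ?_⟩
      · intro w hw hw'
        rcases (tle_class_iff s _ w).mp hw with rfl | rfl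
        · exact Or.inl rfl
        · exact Or.inr rfl
      · show tle s none (tlca s _ _)
        rw [tlca_leaf_leaf s a b hab, if_neg hq]
        exact tle_refl s _
    · rintro ⟨hne, u, v, hcov, rfl, hv, hm⟩
      have hab : a ≠ b := fun h => hne (by rw [h])
      have : tlca s (some (Sum.inl a)) (some (Sum.inl b)) = none :=
        (tle_none_iff s _).mp hm
      rw [tlca_leaf_leaf s a b hab] at this
      intro hrab
      rw [if_pos (Quotient.sound hrab)] at this
      exact absurd this (by simp)

end Main

/-- A graph is the Fitch graph of some 0/1-edge-labeled rooted
tree iff it is complete multipartite, iff it has no induced `K₂ + K₁`. -/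
theorem stmt3 {L : Type} [Fintype L] (G : SimpleGraph L) :
    (IsFitchGraph G ↔ IsCompleteMultipartite G) ∧
    (IsCompleteMultipartite G ↔ NoInducedK2K1 G) := by
  exact ⟨⟨fun hf => CM_of_no G (no_of_fitch G hf), fun hc => fitch_of_CM G hc⟩,
    ⟨no_of_CM G, CM_of_no G⟩⟩
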